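/- Let a, b > 0 and let c₁, c₂ satisfy 0 ≤ c₁ < c₂ ≤ 1. For x ∈ [0,1] define h_c(x) = x·(1-x)·(c·(a+b)·x - (a - (1-c)·b)). Then for every x with 0 ≤ x ≤ 1: if x ≤ b/(a+b) then h_{c₂}(x) - h_{c₁}(x) ≤ 0, and if b/(a+b) < x < 1 then h_{c₂}(x) - h_{c₁}(x) > 0. That is, a society with higher need for coordination changes toward norm B more slowly than one with lower need for coordination until the proportion of B-players exceeds b/(a+b). -/
import Mathlib


/-- A society with higher need for coordination changes toward norm B more
slowly until the proportion of B-players exceeds b/(a+b): for x ∈ [0,1],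
h_{c₂}(x) - h_{c₁}(x) ≤ 0 when x ≤ b/(a+b), and > 0 when b/(a+b) < x < 1. -/
theorem cultural_inertia
    (a b c₁ c₂ : ℝ)
    (ha : 0 < a) (hb : 0 < b)
    (hc₁0 : 0 ≤ c₁) (hc₁₂ : c₁ < c₂) (hc₂1 : c₂ ≤ 1)
    (h : ℝ → ℝ → ℝ)
    (hh : ∀ c x, h c x = x * (1 - x) * (c * (a + b) * x - (a - (1 - c) * b))) :
    ∀ x : ℝ, 0 ≤ x → x ≤ 1 →
      (x ≤ b / (a + b) → h c₂ x - h c₁ x ≤ 0) ∧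
      (b / (a + b) < x → x < 1 → h c₂ x - h c₁ x > 0) := by
  intro x hx0 hx1
  have hab : 0 < a + b := by linarith
  have key : h c₂ x - h c₁ x = x * (1 - x) * (c₂ - c₁) * ((a + b) * x - b) := by
    rw [hh, hh]; ring
  constructor
  · intro hle
    have h2 : (a + b) * x - b ≤ 0 := by
      have := (le_div_iff₀ hab).mp hle
      linarith
    rw [key]
    have h1 : 0 ≤ x * (1 - x) * (c₂ - c₁) :=
      mul_nonneg (mul_nonneg hx0 (by linarith)) (by linarith)
    exact mul_nonpos_of_nonneg_of_nonpos h1 h2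
  · intro hgt hlt
    have h2 : 0 < (a + b) * x - b := by
      have := (div_lt_iff₀ hab).mp hgt
      linarith
    rw [key]
    have hx0' : 0 < x := lt_trans (by positivity) hgt
    exact mul_pos (mul_pos (mul_pos hx0' (by linarith)) (by linarith)) h2
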